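/- Let d ∈ 2ℕ and let T_d ⊂ S_d denote the set of permutations that are products of d/2 disjoint transpositions (fixed-point-free involutions). For A ⊆ {1,…,⌊d/4⌋} define β_A(σ) = σ · ∏_{i∈A, a_{4i-1}<a_{4i-2}} (a_{4i-3} a_{4i-1})(a_{4i-2} a_{4i}), where (a_1 a_2) ≺ ⋯ ≺ (a_{d-1} a_d) is the canonical ordering of the transpositions of σ (transpositions ordered by their smaller element, and a_{2i-1} < a_{2i}). Then β_A(σ) ∈ T_d. -/

import Mathlib

private lemma aux_swap_commute {α : Type*} [DecidableEq α] {a b c d : α}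
    (hac : a ≠ c) (had : a ≠ d) (hbc : b ≠ c) (hbd : b ≠ d) :
    Commute (Equiv.swap a b) (Equiv.swap c d) := by
  apply Equiv.Perm.Disjoint.commute
  intro x
  by_cases hx : x = a ∨ x = b
  · right
    rcases hx with rfl | rfl
    · exact Equiv.swap_apply_of_ne_of_ne hac had
    · exact Equiv.swap_apply_of_ne_of_ne hbc hbd
  · push_neg at hx
    left
    exact Equiv.swap_apply_of_ne_of_ne hx.1 hx.2

private lemma aux_prod_fix {α : Type*} (f : ℕ → Equiv.Perm α) (l : List ℕ) (x : α)
    (h : ∀ i ∈ l, f i x = x) : (l.map f).prod x = x := by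
  induction l with
  | nil => simp
  | cons j rest ih =>
    simp only [List.map_cons, List.prod_cons, Equiv.Perm.mul_apply]
    rw [ih (fun i hi => h i (List.mem_cons_of_mem _ hi)), h j (List.mem_cons_self)]

private lemma aux_prod_single {α : Type*} (f : ℕ → Equiv.Perm α) (l : List ℕ) (x : α)
    (i : ℕ) (hi : i ∈ l) (hnd : l.Nodup)
    (h : ∀ j ∈ l, j ≠ i → f j x = x ∧ f j (f i x) = f i x) :
    (l.map f).prod x = f i x := by
  induction l with
  | nil => simp at hi
  | cons j rest ih =>
    simp only [List.map_cons, List.prod_cons, Equiv.Perm.mul_apply]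
    rcases List.mem_cons.mp hi with rfl | hir
    · have hrest : ∀ k ∈ rest, f k x = x := by
        intro k hk
        have hki : k ≠ i := fun hkj => (List.nodup_cons.mp hnd).1 (hkj ▸ hk)
        exact (h k (List.mem_cons_of_mem _ hk) hki).1
      rw [aux_prod_fix f rest x hrest]
    · have hji : j ≠ i := by
        rintro rfl; exact (List.nodup_cons.mp hnd).1 hir
      rw [ih hir (List.nodup_cons.mp hnd).2
        (fun k hk hki => h k (List.mem_cons_of_mem _ hk) hki)]
      exact (h j (List.mem_cons_self) hji).2

private lemma aux_prod_sq {α : Type*} (f : ℕ → Equiv.Perm α) (l : List ℕ) (hnd : l.Nodup)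
    (hc : ∀ i ∈ l, ∀ j ∈ l, i ≠ j → Commute (f i) (f j))
    (hsq : ∀ i ∈ l, f i * f i = 1) :
    (l.map f).prod * (l.map f).prod = 1 := by
  induction l with
  | nil => simp
  | cons j rest ih =>
    simp only [List.map_cons, List.prod_cons]
    have hcom : Commute (f j) ((rest.map f).prod) := by
      apply Commute.list_prod_right
      intro g hg
      rcases List.mem_map.mp hg with ⟨k, hk, rfl⟩
      have hjk : j ≠ k := fun h => (List.nodup_cons.mp hnd).1 (h ▸ hk)
      exact hc j (List.mem_cons_self) k (List.mem_cons_of_mem _ hk) hjk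
    calc f j * (rest.map f).prod * (f j * (rest.map f).prod)
        = f j * ((rest.map f).prod * f j) * (rest.map f).prod := by group
      _ = f j * (f j * (rest.map f).prod) * (rest.map f).prod := by rw [← hcom.eq]
      _ = (f j * f j) * ((rest.map f).prod * (rest.map f).prod) := by group
      _ = 1 := by
          rw [hsq j (List.mem_cons_self),
            ih (List.nodup_cons.mp hnd).2
              (fun i hi k hk => hc i (List.mem_cons_of_mem _ hi) k (List.mem_cons_of_mem _ hk))
              (fun i hi => hsq i (List.mem_cons_of_mem _ hi)), one_mul]

set_option maxHeartbeats 2000000 in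
theorem stmt_7 (d : ℕ) (hdeven : d % 2 = 0) (hdpos : 0 < d)
    (σ : Equiv.Perm (Fin d)) (hinv : σ * σ = 1) (hfpf : ∀ x, σ x ≠ x)
    (a : ℕ → Fin d)
    (hpair : ∀ i, 1 ≤ i → i ≤ d / 2 → σ (a (2*i - 1)) = a (2*i) ∧ a (2*i - 1) < a (2*i))
    (hmono : ∀ i j, 1 ≤ i → i < j → j ≤ d / 2 → a (2*i - 1) < a (2*j - 1))
    (hsurj : ∀ x : Fin d, ∃ i, 1 ≤ i ∧ i ≤ d ∧ a i = x)
    (A : Finset ℕ) (hA : A ⊆ Finset.Icc 1 (d / 4))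
    (τ : Equiv.Perm (Fin d))
    (hτ : τ = σ * (((A.filter fun i => a (4*i - 1) < a (4*i - 2)).sort (· ≤ ·)).map
        (fun i => Equiv.swap (a (4*i - 3)) (a (4*i - 1))
          * Equiv.swap (a (4*i - 2)) (a (4*i)))).prod) :
    τ * τ = 1 ∧ ∀ x, τ x ≠ x := by
  have hσσ : ∀ x, σ (σ x) = x := by
    intro x
    have := congrArg (fun p => p x) hinv
    simpa using this
  have hainj : ∀ i j, 1 ≤ i → i ≤ d → 1 ≤ j → j ≤ d → a i = a j → i = j := by
    have hg : Function.Surjective (fun k : Fin d => a (k.val + 1)) := by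
      intro x
      obtain ⟨i, h1, h2, h3⟩ := hsurj x
      exact ⟨⟨i - 1, by omega⟩, by simp only []; rw [show i - 1 + 1 = i by omega]; exact h3⟩
    have hginj := Finite.injective_iff_surjective.mpr hg
    intro i j h1 h2 h3 h4 h
    have heq : (⟨i - 1, by omega⟩ : Fin d) = ⟨j - 1, by omega⟩ := by
      apply hginj
      simp only []
      rw [show i - 1 + 1 = i by omega, show j - 1 + 1 = j by omega]
      exact h
    have := Fin.mk.injEq _ _ _ _ ▸ heq
    omega
  set f : ℕ → Equiv.Perm (Fin d) := fun i =>
    Equiv.swap (a (4*i - 3)) (a (4*i - 1)) * Equiv.swap (a (4*i - 2)) (a (4*i)) with hfdef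
  set L : List ℕ := (A.filter fun i => a (4*i - 1) < a (4*i - 2)).sort (· ≤ ·) with hL
  have hLmem : ∀ i ∈ L, 1 ≤ i ∧ i ≤ d / 4 := by
    intro i hi
    rw [hL, Finset.mem_sort] at hi
    exact Finset.mem_Icc.mp (hA (Finset.mem_filter.mp hi).1)
  have hLnd : L.Nodup := (A.filter _).sort_nodup _
  have hne : ∀ i, 1 ≤ i → i ≤ d / 4 → ∀ m n, (m = 4*i-3 ∨ m = 4*i-2 ∨ m = 4*i-1 ∨ m = 4*i) →
      (n = 4*i-3 ∨ n = 4*i-2 ∨ n = 4*i-1 ∨ n = 4*i) → m ≠ n → a m ≠ a n := by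
    intro i h1 h2 m n hm hn hmn h
    exact hmn (hainj m n (by omega) (by omega) (by omega) (by omega) h)
  have hs1 : ∀ i, 1 ≤ i → i ≤ d / 4 → σ (a (4*i-3)) = a (4*i-2) := by
    intro i h1 h2
    have := (hpair (2*i-1) (by omega) (by omega)).1
    rw [show 2*(2*i-1)-1 = 4*i-3 by omega, show 2*(2*i-1) = 4*i-2 by omega] at this
    exact this
  have hs2 : ∀ i, 1 ≤ i → i ≤ d / 4 → σ (a (4*i-1)) = a (4*i) := by
    intro i h1 h2
    have := (hpair (2*i) (by omega) (by omega)).1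
    rw [show 2*(2*i)-1 = 4*i-1 by omega, show 2*(2*i) = 4*i by omega] at this
    exact this
  have hs1' : ∀ i, 1 ≤ i → i ≤ d / 4 → σ (a (4*i-2)) = a (4*i-3) := by
    intro i h1 h2
    rw [← hs1 i h1 h2, hσσ]
  have hs2' : ∀ i, 1 ≤ i → i ≤ d / 4 → σ (a (4*i)) = a (4*i-1) := by
    intro i h1 h2
    rw [← hs2 i h1 h2, hσσ]
  -- f j fixes anything outside its quadruple values
  have hffix : ∀ j x, x ≠ a (4*j-3) → x ≠ a (4*j-2) → x ≠ a (4*j-1) → x ≠ a (4*j) →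
      f j x = x := by
    intro j x e1 e2 e3 e4
    show (Equiv.swap (a (4*j-3)) (a (4*j-1)) * Equiv.swap (a (4*j-2)) (a (4*j))) x = x
    rw [Equiv.Perm.mul_apply, Equiv.swap_apply_of_ne_of_ne e2 e4,
      Equiv.swap_apply_of_ne_of_ne e1 e3]
  have hfix : ∀ j, 1 ≤ j → j ≤ d / 4 → ∀ m, 1 ≤ m → m ≤ d →
      m ≠ 4*j-3 → m ≠ 4*j-2 → m ≠ 4*j-1 → m ≠ 4*j → f j (a m) = a m := by
    intro j h1 h2 m hm1 hm2 e1 e2 e3 e4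
    exact hffix j (a m)
      (fun h => e1 (hainj _ _ hm1 hm2 (by omega) (by omega) h))
      (fun h => e2 (hainj _ _ hm1 hm2 (by omega) (by omega) h))
      (fun h => e3 (hainj _ _ hm1 hm2 (by omega) (by omega) h))
      (fun h => e4 (hainj _ _ hm1 hm2 (by omega) (by omega) h))
  -- values of f i on its own quadruple
  have hfv1 : ∀ i, 1 ≤ i → i ≤ d / 4 → f i (a (4*i-3)) = a (4*i-1) := by
    intro i h1 h2
    show (Equiv.swap (a (4*i-3)) (a (4*i-1)) * Equiv.swap (a (4*i-2)) (a (4*i))) _ = _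
    rw [Equiv.Perm.mul_apply,
      Equiv.swap_apply_of_ne_of_ne (hne i h1 h2 _ _ (by tauto) (by tauto) (by omega))
        (hne i h1 h2 _ _ (by tauto) (by tauto) (by omega)),
      Equiv.swap_apply_left]
  have hfv3 : ∀ i, 1 ≤ i → i ≤ d / 4 → f i (a (4*i-1)) = a (4*i-3) := by
    intro i h1 h2
    show (Equiv.swap (a (4*i-3)) (a (4*i-1)) * Equiv.swap (a (4*i-2)) (a (4*i))) _ = _
    rw [Equiv.Perm.mul_apply,
      Equiv.swap_apply_of_ne_of_ne (hne i h1 h2 _ _ (by tauto) (by tauto) (by omega))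
        (hne i h1 h2 _ _ (by tauto) (by tauto) (by omega)),
      Equiv.swap_apply_right]
  have hfv2 : ∀ i, 1 ≤ i → i ≤ d / 4 → f i (a (4*i-2)) = a (4*i) := by
    intro i h1 h2
    show (Equiv.swap (a (4*i-3)) (a (4*i-1)) * Equiv.swap (a (4*i-2)) (a (4*i))) _ = _
    rw [Equiv.Perm.mul_apply, Equiv.swap_apply_left,
      Equiv.swap_apply_of_ne_of_ne (hne i h1 h2 _ _ (by tauto) (by tauto) (by omega))
        (hne i h1 h2 _ _ (by tauto) (by tauto) (by omega))]
  have hfv4 : ∀ i, 1 ≤ i → i ≤ d / 4 → f i (a (4*i)) = a (4*i-2) := by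
    intro i h1 h2
    show (Equiv.swap (a (4*i-3)) (a (4*i-1)) * Equiv.swap (a (4*i-2)) (a (4*i))) _ = _
    rw [Equiv.Perm.mul_apply, Equiv.swap_apply_right,
      Equiv.swap_apply_of_ne_of_ne (hne i h1 h2 _ _ (by tauto) (by tauto) (by omega))
        (hne i h1 h2 _ _ (by tauto) (by tauto) (by omega))]
  have hcomσ : ∀ i, 1 ≤ i → i ≤ d / 4 → Commute σ (f i) := by
    intro i h1 h2
    have e1 := Equiv.mul_swap_eq_swap_mul σ (a (4*i-3)) (a (4*i-1))
    have e2 := Equiv.mul_swap_eq_swap_mul σ (a (4*i-2)) (a (4*i))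
    rw [hs1 i h1 h2, hs2 i h1 h2] at e1
    rw [hs1' i h1 h2, hs2' i h1 h2] at e2
    have hc : Commute (Equiv.swap (a (4*i-3)) (a (4*i-1))) (Equiv.swap (a (4*i-2)) (a (4*i))) :=
      aux_swap_commute (hne i h1 h2 _ _ (by tauto) (by tauto) (by omega))
        (hne i h1 h2 _ _ (by tauto) (by tauto) (by omega))
        (hne i h1 h2 _ _ (by tauto) (by tauto) (by omega))
        (hne i h1 h2 _ _ (by tauto) (by tauto) (by omega))
    show σ * f i = f i * σ
    calc σ * (Equiv.swap (a (4*i-3)) (a (4*i-1)) * Equiv.swap (a (4*i-2)) (a (4*i)))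
        = (σ * Equiv.swap (a (4*i-3)) (a (4*i-1))) * Equiv.swap (a (4*i-2)) (a (4*i)) := by
          rw [mul_assoc]
      _ = (Equiv.swap (a (4*i-2)) (a (4*i)) * σ) * Equiv.swap (a (4*i-2)) (a (4*i)) := by
          rw [e1]
      _ = Equiv.swap (a (4*i-2)) (a (4*i)) * (Equiv.swap (a (4*i-3)) (a (4*i-1)) * σ) := by
          rw [mul_assoc, e2]
      _ = (Equiv.swap (a (4*i-2)) (a (4*i)) * Equiv.swap (a (4*i-3)) (a (4*i-1))) * σ := by
          rw [mul_assoc]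
      _ = f i * σ := by rw [← hc.eq]
  have hfsq : ∀ i, 1 ≤ i → i ≤ d / 4 → f i * f i = 1 := by
    intro i h1 h2
    have hc : Commute (Equiv.swap (a (4*i-3)) (a (4*i-1))) (Equiv.swap (a (4*i-2)) (a (4*i))) :=
      aux_swap_commute (hne i h1 h2 _ _ (by tauto) (by tauto) (by omega))
        (hne i h1 h2 _ _ (by tauto) (by tauto) (by omega))
        (hne i h1 h2 _ _ (by tauto) (by tauto) (by omega))
        (hne i h1 h2 _ _ (by tauto) (by tauto) (by omega))
    show (Equiv.swap (a (4*i-3)) (a (4*i-1)) * Equiv.swap (a (4*i-2)) (a (4*i))) *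
      (Equiv.swap (a (4*i-3)) (a (4*i-1)) * Equiv.swap (a (4*i-2)) (a (4*i))) = 1
    calc _ = Equiv.swap (a (4*i-3)) (a (4*i-1)) * (Equiv.swap (a (4*i-2)) (a (4*i)) *
            Equiv.swap (a (4*i-3)) (a (4*i-1))) * Equiv.swap (a (4*i-2)) (a (4*i)) := by group
      _ = Equiv.swap (a (4*i-3)) (a (4*i-1)) * (Equiv.swap (a (4*i-3)) (a (4*i-1)) *
            Equiv.swap (a (4*i-2)) (a (4*i))) * Equiv.swap (a (4*i-2)) (a (4*i)) := by
          rw [hc.eq]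
      _ = (Equiv.swap (a (4*i-3)) (a (4*i-1)) * Equiv.swap (a (4*i-3)) (a (4*i-1))) *
            (Equiv.swap (a (4*i-2)) (a (4*i)) * Equiv.swap (a (4*i-2)) (a (4*i))) := by group
      _ = 1 := by rw [Equiv.swap_mul_self, Equiv.swap_mul_self, one_mul]
  have hcomf : ∀ i ∈ L, ∀ j ∈ L, i ≠ j → Commute (f i) (f j) := by
    intro i hi j hj hij
    obtain ⟨hi1, hi2⟩ := hLmem i hi
    obtain ⟨hj1, hj2⟩ := hLmem j hj
    apply Equiv.Perm.Disjoint.commute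
    intro x
    by_cases hx : x = a (4*i-3) ∨ x = a (4*i-2) ∨ x = a (4*i-1) ∨ x = a (4*i)
    · right
      rcases hx with rfl | rfl | rfl | rfl
      · exact hfix j hj1 hj2 (4*i-3) (by omega) (by omega) (by omega) (by omega) (by omega)
          (by omega)
      · exact hfix j hj1 hj2 (4*i-2) (by omega) (by omega) (by omega) (by omega) (by omega)
          (by omega)
      · exact hfix j hj1 hj2 (4*i-1) (by omega) (by omega) (by omega) (by omega) (by omega)
          (by omega)
      · exact hfix j hj1 hj2 (4*i) (by omega) (by omega) (by omega) (by omega) (by omega)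
          (by omega)
    · push_neg at hx
      left
      exact hffix i x hx.1 hx.2.1 hx.2.2.1 hx.2.2.2
  set s : Equiv.Perm (Fin d) := (L.map f).prod with hs
  have hssq : s * s = 1 :=
    aux_prod_sq f L hLnd hcomf (fun i hi => hfsq i (hLmem i hi).1 (hLmem i hi).2)
  have hcs : Commute σ s := by
    apply Commute.list_prod_right
    intro g hg
    rcases List.mem_map.mp hg with ⟨k, hk, rfl⟩
    exact hcomσ k (hLmem k hk).1 (hLmem k hk).2
  have hτs : τ = σ * s := hτ
  constructor
  · rw [hτs]
    calc σ * s * (σ * s) = σ * (s * σ) * s := by group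
      _ = σ * (σ * s) * s := by rw [← hcs.eq]
      _ = (σ * σ) * (s * s) := by group
      _ = 1 := by rw [hinv, hssq, one_mul]
  · intro x h
    rw [hτs] at h
    have hx : s x = σ x := by
      have h2 := congrArg σ h
      rw [Equiv.Perm.mul_apply, hσσ] at h2
      exact h2
    -- analyse s x
    by_cases hmem : ∃ i ∈ L, x = a (4*i-3) ∨ x = a (4*i-2) ∨ x = a (4*i-1) ∨ x = a (4*i)
    · obtain ⟨i, hi, hcase⟩ := hmem
      obtain ⟨hi1, hi2⟩ := hLmem i hi
      have hother : ∀ j ∈ L, j ≠ i → ∀ m, (m = 4*i-3 ∨ m = 4*i-2 ∨ m = 4*i-1 ∨ m = 4*i) →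
          f j (a m) = a m := by
        intro j hj hji m hm
        obtain ⟨hj1, hj2⟩ := hLmem j hj
        exact hfix j hj1 hj2 m (by omega) (by omega) (by omega) (by omega) (by omega) (by omega)
      rcases hcase with h1 | h1 | h1 | h1
      · have hsx : s x = a (4*i-1) := by
          rw [h1, hs, aux_prod_single f L _ i hi hLnd (fun j hj hji =>
            ⟨hother j hj hji _ (by tauto), by rw [hfv1 i hi1 hi2]; exact hother j hj hji _ (by tauto)⟩)]
          exact hfv1 i hi1 hi2
        rw [hsx, h1, hs1 i hi1 hi2] at hx
        exact hne i hi1 hi2 _ _ (by tauto) (by tauto) (by omega) hx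
      · have hsx : s x = a (4*i) := by
          rw [h1, hs, aux_prod_single f L _ i hi hLnd (fun j hj hji =>
            ⟨hother j hj hji _ (by tauto), by rw [hfv2 i hi1 hi2]; exact hother j hj hji _ (by tauto)⟩)]
          exact hfv2 i hi1 hi2
        rw [hsx, h1, hs1' i hi1 hi2] at hx
        exact hne i hi1 hi2 _ _ (by tauto) (by tauto) (by omega) hx
      · have hsx : s x = a (4*i-3) := by
          rw [h1, hs, aux_prod_single f L _ i hi hLnd (fun j hj hji =>
            ⟨hother j hj hji _ (by tauto), by rw [hfv3 i hi1 hi2]; exact hother j hj hji _ (by tauto)⟩)]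
          exact hfv3 i hi1 hi2
        rw [hsx, h1, hs2 i hi1 hi2] at hx
        exact hne i hi1 hi2 _ _ (by tauto) (by tauto) (by omega) hx
      · have hsx : s x = a (4*i-2) := by
          rw [h1, hs, aux_prod_single f L _ i hi hLnd (fun j hj hji =>
            ⟨hother j hj hji _ (by tauto), by rw [hfv4 i hi1 hi2]; exact hother j hj hji _ (by tauto)⟩)]
          exact hfv4 i hi1 hi2
        rw [hsx, h1, hs2' i hi1 hi2] at hx
        exact hne i hi1 hi2 _ _ (by tauto) (by tauto) (by omega) hx
    · push_neg at hmem
      have hsx : s x = x := by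
        rw [hs]
        apply aux_prod_fix
        intro j hj
        have := hmem j hj
        exact hffix j x this.1 this.2.1 this.2.2.1 this.2.2.2
      rw [hsx] at hx
      exact hfpf x hx.symm
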